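/- The length of an affine permutation π ∈ S̃_n equals the number of equivalence classes of the set Inv(π) = {(i,j) ∈ ℤ × ℤ : i < j and π(i) > π(j)} under the relation (a,b) ~ (a',b') iff a - a' = b - b' ∈ nℤ. -/

import Mathlib

open scoped TensorProduct

/-- Membership in the affine symmetric group `S̃_n`, viewed inside `Equiv.Perm ℤ`. -/
def IsAffine (n : ℕ) (π : Equiv.Perm ℤ) : Prop :=
  (∀ i : ℤ, π (i + n) = π i + n) ∧
  (∑ i ∈ Finset.Icc (1 : ℤ) (n : ℤ), π i) = ∑ i ∈ Finset.Icc (1 : ℤ) (n : ℤ), i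

/-- The underlying function of the affine reflection `t_{ij}`. -/
def affTFun (n : ℕ) (i j k : ℤ) : ℤ :=
  if (k - i) % (n : ℤ) = 0 then k - i + j
  else if (k - j) % (n : ℤ) = 0 then k - j + i
  else k

theorem affTFun_involutive {n : ℕ} {i j : ℤ} (h : ¬ (j - i) % (n : ℤ) = 0) :
    Function.Involutive (affTFun n i j) := by
  have key : ∀ a : ℤ, a % (n : ℤ) = 0 ↔ (n : ℤ) ∣ a :=
    fun a => (@Int.dvd_iff_emod_eq_zero (n : ℤ) a).symm
  rw [key] at h
  intro k
  by_cases h1 : (n : ℤ) ∣ (k - i)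
  · have h2 : ¬ (n : ℤ) ∣ (k - i + j - i) := by
      intro hd
      apply h
      have h5 : j - i = (k - i + j - i) - (k - i) := by ring
      rw [h5]
      exact dvd_sub hd h1
    have h3 : (n : ℤ) ∣ (k - i + j - j) := by
      have h5 : k - i + j - j = k - i := by ring
      rw [h5]; exact h1
    have e1 : affTFun n i j k = k - i + j := by simp [affTFun, key, h1]
    have e2 : affTFun n i j (k - i + j) = k := by
      simp only [affTFun, key]
      rw [if_neg h2, if_pos h3]
      ring
    rw [e1, e2]
  · by_cases h2 : (n : ℤ) ∣ (k - j)
    · have h3 : (n : ℤ) ∣ (k - j + i - i) := by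
        have h5 : k - j + i - i = k - j := by ring
        rw [h5]; exact h2
      have e1 : affTFun n i j k = k - j + i := by simp [affTFun, key, h1, h2]
      have e2 : affTFun n i j (k - j + i) = k := by
        simp only [affTFun, key]
        rw [if_pos h3]
        ring
      rw [e1, e2]
    · have e1 : affTFun n i j k = k := by simp [affTFun, key, h1, h2]
      rw [e1, e1]

/-- The affine reflection `t_{ij}` (interpreted as the identity when `i ≡ j (mod n)`). -/
noncomputable def affT (n : ℕ) (i j : ℤ) : Equiv.Perm ℤ :=
  if h : (j - i) % (n : ℤ) = 0 then 1
  else Function.Involutive.toPerm _ (affTFun_involutive h)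

/-- The simple reflection `s_i = t_{i,i+1}` of `S̃_n`. -/
noncomputable def affS (n : ℕ) (i : ℤ) : Equiv.Perm ℤ := affT n i (i + 1)

/-- Coxeter length: minimal length of a word in the simple reflections `s_1, …, s_n`. -/
noncomputable def wordLength (n : ℕ) (π : Equiv.Perm ℤ) : ℕ :=
  sInf {l : ℕ | ∃ w : List ℤ,
    (∀ x ∈ w, 1 ≤ x ∧ x ≤ (n : ℤ)) ∧ (w.map (affS n)).prod = π ∧ w.length = l}

/-- The set of inversions of `π`, up to the diagonal translation relation. -/
def InvPair (π : Equiv.Perm ℤ) : Type :=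
  {p : ℤ × ℤ // p.1 < p.2 ∧ π p.2 < π p.1}

/-- The number of equivalence classes of inversions of `π` under
`(a,b) ~ (a + mn, b + mn)`. -/
noncomputable def invLength (n : ℕ) (π : Equiv.Perm ℤ) : ℕ :=
  Nat.card (Quot fun p q : InvPair π =>
    ∃ m : ℤ, q.1.1 = p.1.1 + m * n ∧ q.1.2 = p.1.2 + m * n)

/-- Entry `c_i` of the code of an affine permutation. -/
noncomputable def codeEntry (π : Equiv.Perm ℤ) (i : ℤ) : ℕ :=
  Nat.card {j : ℤ // i < j ∧ π j < π i}

/-- Entry `ĉ_i` of the involution code of an affine involution. -/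
noncomputable def icodeEntry (z : Equiv.Perm ℤ) (i : ℤ) : ℕ :=
  Nat.card {j : ℤ // i < j ∧ z j < z i ∧ z j ≤ i}

/-- `ℓ'(z)`: `n` minus the number of orbits of `z` acting on `ℤ/nℤ`. -/
noncomputable def lprime (n : ℕ) (z : Equiv.Perm ℤ) : ℕ :=
  n - Nat.card (Quot fun a b : ZMod n => ((z (a.val : ℤ) : ℤ) : ZMod n) = b)

/-- The characterizing properties of the Demazure (0-Hecke) product on `S̃_n`:
closure, associativity, `s_i ∘ s_i = s_i`, and agreement with the group product
on length-additive factorizations. -/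
def IsDemazure (n : ℕ) (D : Equiv.Perm ℤ → Equiv.Perm ℤ → Equiv.Perm ℤ) : Prop :=
  (∀ a b, IsAffine n a → IsAffine n b → IsAffine n (D a b)) ∧
  (∀ a b c, IsAffine n a → IsAffine n b → IsAffine n c →
    D (D a b) c = D a (D b c)) ∧
  (∀ i : ℤ, D (affS n i) (affS n i) = affS n i) ∧
  (∀ a b, IsAffine n a → IsAffine n b →
    wordLength n (a * b) = wordLength n a + wordLength n b → D a b = a * b)

/-- The set of Hecke atoms `{π : π⁻¹ ∘ π = z}`. -/
def AHecke (n : ℕ) (D : Equiv.Perm ℤ → Equiv.Perm ℤ → Equiv.Perm ℤ)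
    (z : Equiv.Perm ℤ) : Set (Equiv.Perm ℤ) :=
  {π | IsAffine n π ∧ D π⁻¹ π = z}

/-- The set of atoms: minimal-length Hecke atoms. -/
def DemAtoms (n : ℕ) (D : Equiv.Perm ℤ → Equiv.Perm ℤ → Equiv.Perm ℤ)
    (z : Equiv.Perm ℤ) : Set (Equiv.Perm ℤ) :=
  {π | π ∈ AHecke n D z ∧ ∀ σ ∈ AHecke n D z, wordLength n π ≤ wordLength n σ}

/-- The Bruhat covering relation on `S̃_n`. -/
def BruhatCov (n : ℕ) (a b : Equiv.Perm ℤ) : Prop :=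
  (∃ i j : ℤ, i < j ∧ (j - i) % (n : ℤ) ≠ 0 ∧ b = a * affT n i j) ∧
  wordLength n b = wordLength n a + 1

/-- The Bruhat order on `S̃_n`. -/
def BruhatLE (n : ℕ) : Equiv.Perm ℤ → Equiv.Perm ℤ → Prop :=
  Relation.ReflTransGen (BruhatCov n)

/-- The covering relation of the Bruhat order restricted to involutions in `S̃_n`. -/
def BruhatCovI (n : ℕ) (y z : Equiv.Perm ℤ) : Prop :=
  IsAffine n y ∧ IsAffine n z ∧ y⁻¹ = y ∧ z⁻¹ = z ∧
  BruhatLE n y z ∧ y ≠ z ∧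
  ∀ w : Equiv.Perm ℤ, IsAffine n w → w⁻¹ = w →
    BruhatLE n y w → BruhatLE n w z → w = y ∨ w = z

/-- Strict dominance order on partitions (written as weakly decreasing functions). -/
def DomLT (p q : ℕ → ℕ) : Prop :=
  p ≠ q ∧ ∀ k : ℕ, ∑ i ∈ Finset.range k, p i ≤ ∑ i ∈ Finset.range k, q i

/-- The shape `λ(π)`: the transpose of the partition sorting the code of `π⁻¹`,
recorded as the weakly decreasing function `k ↦ λ(π)_{k+1}`. -/
noncomputable def affShape (n : ℕ) (π : Equiv.Perm ℤ) : ℕ → ℕ :=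
  fun k => Multiset.countP (fun x => k < x)
    ((Finset.Icc (1 : ℤ) (n : ℤ)).val.map (codeEntry π⁻¹))

/-- The shape `μ(z)`: the transpose of the partition sorting the involution code of `z`,
recorded as the weakly decreasing function `k ↦ μ(z)_{k+1}`. -/
noncomputable def invShape (n : ℕ) (z : Equiv.Perm ℤ) : ℕ → ℕ :=
  fun k => Multiset.countP (fun x => k < x)
    ((Finset.Icc (1 : ℤ) (n : ℤ)).val.map (icodeEntry z))

/-- The weakly decreasing rearrangement of a multiset of naturals, padded by zeros. -/
noncomputable def rearr (s : Multiset ℕ) : ℕ → ℕ :=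
  fun k => ((s.sort (· ≤ ·)).reverse).getD k 0

/-- Remove the entries of a list of integers that repeat an earlier residue mod `n`. -/
def dedupMod (n : ℕ) : List ℤ → List ℤ
  | [] => []
  | x :: xs => x :: dedupMod n (xs.filter fun y => (y - x) % (n : ℤ) ≠ 0)
termination_by l => l.length
decreasing_by
  simp only [List.length_cons]
  exact Nat.lt_succ_of_le (List.length_unattach.trans_le
    ((List.length_filter_le _ _).trans List.length_attach.le))

/-- The window `[[z(a₁), a₁, z(a₂), a₂, …]]` of `α_min(z)⁻¹`, where `a₁ < a₂ < ⋯`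
are the elements `a ∈ [n]` with `a ≤ z(a)`. -/
noncomputable def aminWindow (n : ℕ) (z : Equiv.Perm ℤ) : List ℤ :=
  dedupMod n
    ((((Finset.Icc (1 : ℤ) (n : ℤ)).sort (· ≤ ·)).filter fun a => a ≤ z a).flatMap
      fun a => [z a, a])

/-- Cyclically decreasing elements of `S̃_n`. -/
def IsCycDec (n : ℕ) (π : Equiv.Perm ℤ) : Prop :=
  ∃ w : List ℤ,
    (∀ x ∈ w, 1 ≤ x ∧ x ≤ (n : ℤ)) ∧ (w.map (affS n)).prod = π ∧
    w.length = wordLength n π ∧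
    w.Pairwise fun a b => (a + 1 - b) % (n : ℤ) ≠ 0

/-- The coefficient of the monomial `∏ₖ xₖ₊₁^(α k)` in Lam's affine Stanley symmetric
function `F_π`: the number of length-additive factorizations of `π` into cyclically
decreasing factors of lengths prescribed by `α`. -/
noncomputable def stanleyCoeff (n : ℕ) (π : Equiv.Perm ℤ) (α : ℕ →₀ ℕ) : ℕ :=
  Nat.card {f : ℕ → Equiv.Perm ℤ //
    (∀ k, IsCycDec n (f k)) ∧ (∀ k, wordLength n (f k) = α k) ∧
    (∑ k ∈ α.support, α k) = wordLength n π ∧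
    ∃ N : ℕ, (∀ k, N ≤ k → f k = 1) ∧ ((List.range N).map f).prod = π}

/-- The set `Φ⁻_r(y)` of Bruhat covers of `y` of the form `τⁿ_{i r}(y)` with `i < r`
and `i ∉ {r, y(r)} + nℤ`. -/
def PhiMinus (n : ℕ) (τ : ℤ → ℤ → Equiv.Perm ℤ → Equiv.Perm ℤ)
    (y : Equiv.Perm ℤ) (r : ℤ) : Set (Equiv.Perm ℤ) :=
  {z | BruhatCovI n y z ∧ ∃ i : ℤ, i < r ∧ (i - r) % (n : ℤ) ≠ 0 ∧
    (i - y r) % (n : ℤ) ≠ 0 ∧ z = τ i r y}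

/-- The set `Φ⁺_r(y)` of Bruhat covers of `y` of the form `τⁿ_{r j}(y)` with `r < j`
and `j ∉ {r, y(r)} + nℤ`. -/
def PhiPlus (n : ℕ) (τ : ℤ → ℤ → Equiv.Perm ℤ → Equiv.Perm ℤ)
    (y : Equiv.Perm ℤ) (r : ℤ) : Set (Equiv.Perm ℤ) :=
  {z | BruhatCovI n y z ∧ ∃ j : ℤ, r < j ∧ (j - r) % (n : ℤ) ≠ 0 ∧
    (j - y r) % (n : ℤ) ≠ 0 ∧ z = τ r j y}

/-- The affine symmetric group as a subtype of `Equiv.Perm ℤ`. -/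
abbrev AffPerm (n : ℕ) := {π : Equiv.Perm ℤ // IsAffine n π}

/-- The coproduct `Δ(π) = Σ_{π ≐ π'π''} π' ⊗ π''` on `ℚ S̃_n`. -/
noncomputable def affComul (n : ℕ) :
    (AffPerm n →₀ ℚ) →ₗ[ℚ] TensorProduct ℚ (AffPerm n →₀ ℚ) (AffPerm n →₀ ℚ) :=
  Finsupp.lift _ ℚ _ fun π : AffPerm n =>
    ∑ᶠ p ∈ {p : AffPerm n × AffPerm n |
        p.1.val * p.2.val = π.val ∧
        wordLength n π.val = wordLength n p.1.val + wordLength n p.2.val},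
      (Finsupp.single p.1 (1 : ℚ)) ⊗ₜ[ℚ] (Finsupp.single p.2 (1 : ℚ))

section Aux
variable {n : ℕ}

private lemma modz (a : ℤ) : a % (n : ℤ) = 0 ↔ (n : ℤ) ∣ a :=
  (@Int.dvd_iff_emod_eq_zero (n : ℤ) a).symm

private lemma dvd_small {d : ℤ} (hn : 0 < (n:ℤ)) (h : (n:ℤ) ∣ d)
    (h1 : -(n:ℤ) < d) (h2 : d < n) : d = 0 := by
  obtain ⟨c, rfl⟩ := h
  have hc1 : c < 1 := by nlinarith
  have hc2 : -1 < c := by nlinarith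
  have : c = 0 := by omega
  simp [this]

private lemma per_iter {f : ℤ → ℤ} (h : ∀ k, f (k + n) = f k + n) :
    ∀ (m k : ℤ), f (k + m * n) = f k + m * n := by
  intro m
  induction m using Int.induction_on with
  | zero => simp
  | succ m ih =>
      intro k
      have : k + (m + 1) * n = (k + m * n) + n := by ring
      rw [this, h, ih]; ring
  | pred m ih =>
      intro k
      have h2 := h (k + (-(m:ℤ) - 1) * n)
      have : k + (-(m:ℤ) - 1) * n + n = k + (-(m:ℤ)) * n := by ring
      rw [this] at h2
      have := ih k
      omega

private lemma exists_rep (hn : 0 < n) (k : ℤ) :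
    ∃ r m : ℤ, 1 ≤ r ∧ r ≤ n ∧ k = r + m * n := by
  have hn' : (0:ℤ) < n := by exact_mod_cast hn
  refine ⟨(k - 1) % n + 1, (k - 1) / n, ?_, ?_, ?_⟩
  · have := Int.emod_nonneg (k - 1) (by omega : (n:ℤ) ≠ 0); omega
  · have := Int.emod_lt_of_pos (k - 1) hn'; omega
  · have h1 := Int.mul_ediv_add_emod (k - 1) n
    have h2 : (k-1) / n * (n:ℤ) = n * ((k-1)/n) := mul_comm _ _
    omega

end Aux
section Aux2

/-- The relation of diagonal translation, as used by `invLength`. -/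
private def InvRel (n : ℕ) (π : Equiv.Perm ℤ) (p q : InvPair π) : Prop :=
  ∃ m : ℤ, q.1.1 = p.1.1 + m * n ∧ q.1.2 = p.1.2 + m * n

/-- canonical representatives -/
private def Sset (n : ℕ) (π : Equiv.Perm ℤ) : Set (ℤ × ℤ) :=
  {p | (1 ≤ p.1 ∧ p.1 ≤ n) ∧ p.1 < p.2 ∧ π p.2 < π p.1}

private lemma invLength_def (n : ℕ) (π : Equiv.Perm ℤ) :
    invLength n π = Nat.card (Quot (InvRel n π)) := rfl

/-- normalization map to canonical representatives -/
private noncomputable def toS {n : ℕ} {π : Equiv.Perm ℤ} (hn : 0 < n)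
    (hper : ∀ k : ℤ, π (k + n) = π k + n) (p : InvPair π) : Sset n π := by
  refine ⟨(p.1.1 - ((p.1.1 - 1) / n) * n, p.1.2 - ((p.1.1 - 1) / n) * n), ⟨?_, ?_⟩, ?_, ?_⟩
  all_goals
    have hn' : (0:ℤ) < n := by exact_mod_cast hn
  · have h1 := Int.mul_ediv_add_emod (p.1.1 - 1) n
    have h2 : (p.1.1 - 1) / n * (n:ℤ) = n * ((p.1.1-1)/n) := mul_comm _ _
    have h3 := Int.emod_nonneg (p.1.1 - 1) (by omega : (n:ℤ) ≠ 0)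
    omega
  · have h1 := Int.mul_ediv_add_emod (p.1.1 - 1) n
    have h2 : (p.1.1 - 1) / n * (n:ℤ) = n * ((p.1.1-1)/n) := mul_comm _ _
    have h4 := Int.emod_lt_of_pos (p.1.1 - 1) hn'
    omega
  · have := p.2.1
    show p.1.1 - _ < p.1.2 - _
    omega
  · show π (p.1.2 - ((p.1.1 - 1) / n) * n) < π (p.1.1 - ((p.1.1 - 1) / n) * n)
    have h1 : p.1.2 - ((p.1.1 - 1) / n) * n = p.1.2 + (-((p.1.1 - 1) / n)) * n := by ring
    have h2 : p.1.1 - ((p.1.1 - 1) / n) * n = p.1.1 + (-((p.1.1 - 1) / n)) * n := by ring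
    have e1 := per_iter (n := n) hper (-((p.1.1 - 1) / n)) p.1.2
    have e2 := per_iter (n := n) hper (-((p.1.1 - 1) / n)) p.1.1
    rw [h1, h2, e1, e2]
    have := p.2.2
    omega

private lemma toS_resp {n : ℕ} {π : Equiv.Perm ℤ} (hn : 0 < n)
    (hper : ∀ k : ℤ, π (k + n) = π k + n) (p q : InvPair π) (h : InvRel n π p q) :
    toS hn hper p = toS hn hper q := by
  obtain ⟨m, h1, h2⟩ := h
  have hn' : (0:ℤ) < n := by exact_mod_cast hn
  have hdiv : (q.1.1 - 1) / n = (p.1.1 - 1) / n + m := by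
    rw [h1]
    have : p.1.1 + m * n - 1 = (p.1.1 - 1) + m * n := by ring
    rw [this, Int.add_mul_ediv_right _ _ (by omega : (n:ℤ) ≠ 0)]
  apply Subtype.ext
  simp only [toS, h1, h2]
  have hdiv' : (p.1.1 + m * (n:ℤ) - 1) / n = (p.1.1 - 1) / n + m := by
    rw [h1] at hdiv; exact hdiv
  rw [hdiv', Prod.mk.injEq]
  constructor <;> ring

private noncomputable def quotEquiv {n : ℕ} {π : Equiv.Perm ℤ} (hn : 0 < n)
    (hper : ∀ k : ℤ, π (k + n) = π k + n) :
    Quot (InvRel n π) ≃ Sset n π where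
  toFun := Quot.lift (toS hn hper) (toS_resp hn hper)
  invFun q := Quot.mk _ ⟨(q.1.1, q.1.2), q.2.2.1, q.2.2.2⟩
  left_inv := by
    apply Quot.ind
    intro p
    apply Quot.sound
    exact ⟨(p.1.1 - 1) / n, by simp [toS], by simp [toS]⟩
  right_inv := by
    rintro ⟨⟨a, b⟩, ⟨ha1, ha2⟩, hab, hinv⟩
    have hn' : (0:ℤ) < n := by exact_mod_cast hn
    have h0 : (a - 1) / (n:ℤ) = 0 := Int.ediv_eq_zero_of_lt (by omega) (by omega)
    apply Subtype.ext
    simp [toS, h0]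

private lemma sset_finite {n : ℕ} {π : Equiv.Perm ℤ} (hn : 0 < n)
    (hper : ∀ k : ℤ, π (k + n) = π k + n) : (Sset n π).Finite := by
  classical
  have hn' : (0:ℤ) < n := by exact_mod_cast hn
  have hne : ((Finset.Icc (1:ℤ) n).image π).Nonempty := by simp; omega
  set Mx := ((Finset.Icc (1:ℤ) n).image π).max' hne with hMx
  set Mn := ((Finset.Icc (1:ℤ) n).image π).min' hne with hMn
  have hsub : Sset n π ⊆ (Set.Icc (1:ℤ) n) ×ˢ (π.symm '' Set.Icc Mn Mx) := by
    rintro ⟨a, b⟩ ⟨⟨ha1, ha2⟩, hab, hinv⟩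
    have hinv' : π b < π a := hinv
    constructor
    · exact ⟨ha1, ha2⟩
    · refine ⟨π b, ⟨?_, ?_⟩, by simp⟩
      · obtain ⟨r, m, hr1, hr2, hb⟩ := exists_rep hn b
        have hm : 0 ≤ m := by nlinarith
        have hpb : π b = π r + m * n := by rw [hb, per_iter (n := n) hper]
        have hrm : Mn ≤ π r := by
          apply Finset.min'_le
          simp only [Finset.mem_image]
          exact ⟨r, by simp [Finset.mem_Icc]; omega, rfl⟩
        nlinarith
      · have hax : π a ≤ Mx := by
          apply Finset.le_max'
          simp only [Finset.mem_image]
          exact ⟨a, by simp [Finset.mem_Icc]; omega, rfl⟩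
        omega
  exact Set.Finite.subset (Set.Finite.prod (Set.finite_Icc _ _)
    ((Set.finite_Icc _ _).image _)) hsub

private lemma invLength_eq_card {n : ℕ} {π : Equiv.Perm ℤ} (hn : 0 < n)
    (hper : ∀ k : ℤ, π (k + n) = π k + n) :
    invLength n π = Nat.card (Sset n π) := by
  rw [invLength_def]
  exact Nat.card_congr (quotEquiv hn hper)

private lemma quot_finite {n : ℕ} {π : Equiv.Perm ℤ} (hn : 0 < n)
    (hper : ∀ k : ℤ, π (k + n) = π k + n) : Finite (Quot (InvRel n π)) := by
  have : Finite (Sset n π) := (sset_finite hn hper).to_subtype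
  exact Finite.of_equiv _ (quotEquiv hn hper).symm

end Aux2
section Aux3

private lemma affS_apply {n : ℕ} (hn : 2 ≤ n) (i k : ℤ) :
    affS n i k =
      if (k - i) % (n:ℤ) = 0 then k + 1
      else if (k - (i+1)) % (n:ℤ) = 0 then k - 1 else k := by
  have h1 : ¬ ((i + 1 - i) % (n:ℤ) = 0) := by
    have : (i + 1 - i) = 1 := by ring
    rw [this, Int.emod_eq_of_lt (by norm_num) (by exact_mod_cast hn)]
    norm_num
  rw [affS, affT, dif_neg h1]
  show affTFun n i (i+1) k = _
  rw [affTFun]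
  split_ifs with c1 c2 <;> ring

private lemma affS_per {n : ℕ} (hn : 2 ≤ n) (i k : ℤ) :
    affS n i (k + n) = affS n i k + n := by
  have e1 : (k + (n:ℤ) - i) % n = (k - i) % n := by
    have : k + (n:ℤ) - i = (k - i) + 1 * n := by ring
    rw [this, Int.add_mul_emod_self_right]
  have e2 : (k + (n:ℤ) - (i+1)) % n = (k - (i+1)) % n := by
    have : k + (n:ℤ) - (i+1) = (k - (i+1)) + 1 * n := by ring
    rw [this, Int.add_mul_emod_self_right]
  rw [affS_apply hn, affS_apply hn, e1, e2]
  split_ifs <;> ring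

private lemma affS_inv {n : ℕ} (hn : 2 ≤ n) (i k : ℤ) :
    affS n i (affS n i k) = k := by
  have h1 : ¬ ((i + 1 - i) % (n:ℤ) = 0) := by
    have : (i + 1 - i) = 1 := by ring
    rw [this, Int.emod_eq_of_lt (by norm_num) (by exact_mod_cast hn)]
    norm_num
  rw [affS, affT, dif_neg h1]
  exact affTFun_involutive h1 k

private lemma affS_mul_self {n : ℕ} (hn : 2 ≤ n) (i : ℤ) :
    affS n i * affS n i = 1 := by
  apply Equiv.ext
  intro k
  simp only [Equiv.Perm.mul_apply, Equiv.Perm.one_apply]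
  exact affS_inv hn i k

/-- s preserves order except on the special pairs -/
private lemma affS_lt {n : ℕ} (hn : 2 ≤ n) (i a b : ℤ) (hab : a < b)
    (h : ¬ ((a - i) % (n:ℤ) = 0 ∧ b = a + 1)) :
    affS n i a < affS n i b := by
  have hn' : (2:ℤ) ≤ n := by exact_mod_cast hn
  rw [affS_apply hn, affS_apply hn]
  have key : ∀ x y : ℤ, (x - i) % (n:ℤ) = 0 → (y - (i+1)) % (n:ℤ) = 0 →
      y - x - 1 = 0 ∨ (y - x - 1 ≥ n ∨ y - x - 1 ≤ -n) := by
    intro x y hx hy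
    have d1 : (n:ℤ) ∣ (x - i) := (modz _).1 hx
    have d2 : (n:ℤ) ∣ (y - (i+1)) := (modz _).1 hy
    have d3 : (n:ℤ) ∣ (y - x - 1) := by
      have : y - x - 1 = (y - (i+1)) - (x - i) := by ring
      rw [this]; exact dvd_sub d2 d1
    by_cases hc : -(n:ℤ) < y - x - 1 ∧ y - x - 1 < n
    · exact Or.inl (dvd_small (by omega) d3 hc.1 hc.2)
    · right; omega
  split_ifs with c1 c2 c3 c4 c5
  · -- a≡i, b≡i
    have d1 : (n:ℤ) ∣ (a - i) := (modz _).1 c1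
    have d2 : (n:ℤ) ∣ (b - i) := (modz _).1 c2
    have d3 : (n:ℤ) ∣ (b - a) := by
      have : b - a = (b - i) - (a - i) := by ring
      rw [this]; exact dvd_sub d2 d1
    have : (n:ℤ) ≤ b - a := Int.le_of_dvd (by omega) d3
    omega
  · -- a≡i, b≡i+1 : then not b = a+1, so b ≥ a+2, and b-a-1 ≡ 0 mod n
    rcases key a b c1 c3 with h0 | h0 | h0 <;> omega
  · omega
  · -- a≡i+1, b≡i
    rcases key b a c5 c4 with h0 | h0 | h0 <;> omega
  · omega
  · omega
  · -- a other, b≡i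
    omega
  · -- a other, b≡i+1 : s b = b - 1 > a unless b = a+1 and then a ≡ i, excluded...
    rcases (em ((a - i) % (n:ℤ) = 0)) with hai | hai
    · exact absurd hai c1
    · -- b ≡ i+1 and a ≢ i: if b = a+1 then a ≡ i, contradiction
      by_cases hb : b = a + 1
      · exfalso
        apply hai
        have : a - i = (b - (i+1)) := by omega
        rw [this]; assumption
      · omega
  · omega

end Aux3
section Aux4
variable {n : ℕ} {π : Equiv.Perm ℤ} {i : ℤ}

private lemma step_excl (hper : ∀ k : ℤ, π (k + n) = π k + n)
    (hasc : π i < π (i + 1)) (a b : ℤ) (hinv : π b < π a) :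
    ¬ ((a - i) % (n:ℤ) = 0 ∧ b = a + 1) := by
  rintro ⟨h1, rfl⟩
  obtain ⟨m, hm⟩ := (modz _).1 h1
  have hmm : (n:ℤ) * m = m * n := mul_comm _ _
  have ha : a = i + m * n := by omega
  have e1 : π (i + m * n) = π i + m * n := per_iter hper m i
  have e2 : π ((i + 1) + m * n) = π (i + 1) + m * n := per_iter hper m (i + 1)
  have h3 : i + m * n + 1 = (i + 1) + m * n := by ring
  rw [ha, h3, e1, e2] at hinv
  omega

private lemma step_notswap (hn : 2 ≤ n) (a b : ℤ) (hab : a < b) :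
    ¬ ((affS n i a - i) % (n:ℤ) = 0 ∧ affS n i b = affS n i a + 1) := by
  rintro ⟨h1, h2⟩
  have hn' : (2:ℤ) ≤ n := by exact_mod_cast hn
  have e1 : affS n i (affS n i a) = affS n i a + 1 := by
    have := affS_apply hn i (affS n i a)
    rw [if_pos h1] at this
    exact this
  have ha : a = affS n i a + 1 := by
    have h := (affS_inv hn i a).symm
    rw [e1] at h
    exact h
  have e2cond1 : ¬ ((affS n i a + 1 - i) % (n:ℤ) = 0) := by
    obtain ⟨c, hc⟩ := (modz _).1 h1
    have hx : affS n i a + 1 - i = 1 + (n:ℤ) * c := by omega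
    rw [hx, Int.add_mul_emod_self_left, Int.emod_eq_of_lt (by norm_num) (by omega)]
    norm_num
  have e2cond2 : (affS n i a + 1 - (i + 1)) % (n:ℤ) = 0 := by
    have hx : affS n i a + 1 - (i + 1) = affS n i a - i := by ring
    rw [hx]; exact h1
  have e2 : affS n i (affS n i a + 1) = affS n i a := by
    have := affS_apply hn i (affS n i a + 1)
    rw [if_neg e2cond1, if_pos e2cond2] at this
    omega
  have hb : b = affS n i a := by
    have h := (affS_inv hn i b).symm
    rw [h2, e2] at h
    exact h
  omega

private noncomputable def stepF (hn : 2 ≤ n) (p : InvPair (π * affS n i)) :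
    (Quot (InvRel n π)) ⊕ Unit :=
  if h : (p.1.1 - i) % (n:ℤ) = 0 ∧ p.1.2 = p.1.1 + 1 then Sum.inr ()
  else Sum.inl (Quot.mk _ ⟨(affS n i p.1.1, affS n i p.1.2),
    affS_lt hn i _ _ p.2.1 h, p.2.2⟩)

private noncomputable def stepG0 (hn : 2 ≤ n) (hper : ∀ k : ℤ, π (k + n) = π k + n)
    (hasc : π i < π (i + 1)) (p : InvPair π) : InvPair (π * affS n i) :=
  ⟨(affS n i p.1.1, affS n i p.1.2),
    affS_lt hn i _ _ p.2.1 (step_excl hper hasc _ _ p.2.2), by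
      show π (affS n i (affS n i p.1.2)) < π (affS n i (affS n i p.1.1))
      rw [affS_inv hn, affS_inv hn]; exact p.2.2⟩

private lemma stepF_resp (hn : 2 ≤ n) (p q : InvPair (π * affS n i))
    (h : InvRel n (π * affS n i) p q) : stepF hn p = stepF hn q := by
  obtain ⟨m, h1, h2⟩ := h
  have c1 : (q.1.1 - i) % (n:ℤ) = (p.1.1 - i) % (n:ℤ) := by
    rw [h1]
    have hx : p.1.1 + m * n - i = (p.1.1 - i) + m * (n:ℤ) := by ring
    rw [hx, Int.add_mul_emod_self_right]
  have c2 : (q.1.2 = q.1.1 + 1) ↔ (p.1.2 = p.1.1 + 1) := by omega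
  have hcond : ((q.1.1 - i) % (n:ℤ) = 0 ∧ q.1.2 = q.1.1 + 1) ↔
      ((p.1.1 - i) % (n:ℤ) = 0 ∧ p.1.2 = p.1.1 + 1) := by rw [c1, c2]
  unfold stepF
  by_cases hc : (p.1.1 - i) % (n:ℤ) = 0 ∧ p.1.2 = p.1.1 + 1
  · rw [dif_pos hc, dif_pos (hcond.mpr hc)]
  · rw [dif_neg hc, dif_neg (fun hx => hc (hcond.mp hx))]
    congr 1
    apply Quot.sound
    refine ⟨m, ?_, ?_⟩
    · show affS n i q.1.1 = affS n i p.1.1 + m * n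
      rw [h1]; exact per_iter (affS_per hn i) m p.1.1
    · show affS n i q.1.2 = affS n i p.1.2 + m * n
      rw [h2]; exact per_iter (affS_per hn i) m p.1.2

private lemma stepG0_resp (hn : 2 ≤ n) (hper : ∀ k : ℤ, π (k + n) = π k + n)
    (hasc : π i < π (i + 1)) (p q : InvPair π) (h : InvRel n π p q) :
    Quot.mk (InvRel n (π * affS n i)) (stepG0 hn hper hasc p) =
    Quot.mk (InvRel n (π * affS n i)) (stepG0 hn hper hasc q) := by
  obtain ⟨m, h1, h2⟩ := h
  apply Quot.sound
  refine ⟨m, ?_, ?_⟩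
  · show affS n i q.1.1 = affS n i p.1.1 + m * n
    rw [h1]; exact per_iter (affS_per hn i) m p.1.1
  · show affS n i q.1.2 = affS n i p.1.2 + m * n
    rw [h2]; exact per_iter (affS_per hn i) m p.1.2

private lemma step_asc (hn : 2 ≤ n) (hper : ∀ k : ℤ, π (k + n) = π k + n)
    (hasc : π i < π (i + 1)) :
    invLength n (π * affS n i) = invLength n π + 1 := by
  have hn0 : 0 < n := by omega
  have si : affS n i i = i + 1 := by
    have := affS_apply hn i i
    rw [if_pos (by simp)] at this
    exact this
  have si1 : affS n i (i + 1) = i := by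
    have hc1 : ¬ ((i + 1 - i) % (n:ℤ) = 0) := by
      have hx : i + 1 - i = (1:ℤ) := by ring
      rw [hx, Int.emod_eq_of_lt (by norm_num) (by exact_mod_cast (by omega : 1 < n))]
      norm_num
    have := affS_apply hn i (i + 1)
    rw [if_neg hc1, if_pos (by simp)] at this
    omega
  have basepf : ((i : ℤ), i + 1).1 < ((i:ℤ), i + 1).2 ∧
      (π * affS n i) ((i:ℤ), i + 1).2 < (π * affS n i) ((i:ℤ), i+1).1 := by
    constructor
    · omega
    · show π (affS n i (i + 1)) < π (affS n i i)
      rw [si, si1]; exact hasc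
  let F : Quot (InvRel n (π * affS n i)) → (Quot (InvRel n π)) ⊕ Unit :=
    Quot.lift (stepF hn) (stepF_resp hn)
  let G : (Quot (InvRel n π)) ⊕ Unit → Quot (InvRel n (π * affS n i)) :=
    Sum.elim
      (Quot.lift (fun p => Quot.mk _ (stepG0 hn hper hasc p)) (stepG0_resp hn hper hasc))
      (fun _ => Quot.mk _ ⟨((i:ℤ), i + 1), basepf⟩)
  have hGF : Function.LeftInverse G F := by
    apply Quot.ind
    intro p
    show G (stepF hn p) = Quot.mk _ p
    by_cases hc : (p.1.1 - i) % (n:ℤ) = 0 ∧ p.1.2 = p.1.1 + 1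
    · rw [show stepF hn p = Sum.inr () from dif_pos hc]
      show Quot.mk _ _ = Quot.mk _ p
      apply Quot.sound
      obtain ⟨m, hm⟩ := (modz _).1 hc.1
      have hmm : (n:ℤ) * m = m * n := mul_comm _ _
      exact ⟨m, by show p.1.1 = i + m * n; omega, by show p.1.2 = i + 1 + m * n; omega⟩
    · rw [show stepF hn p = Sum.inl _ from dif_neg hc]
      show Quot.mk _ (stepG0 hn hper hasc _) = Quot.mk _ p
      congr 1
      apply Subtype.ext
      show (affS n i (affS n i p.1.1), affS n i (affS n i p.1.2)) = p.1
      rw [affS_inv hn, affS_inv hn]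
  have hFG : Function.RightInverse G F := by
    rintro (q | u)
    · induction q using Quot.ind with
      | _ p =>
        show F (Quot.mk _ (stepG0 hn hper hasc p)) = Sum.inl (Quot.mk _ p)
        show stepF hn (stepG0 hn hper hasc p) = Sum.inl (Quot.mk _ p)
        simp only [stepF, stepG0]
        refine (dif_neg (step_notswap (i := i) hn p.1.1 p.1.2 p.2.1)).trans ?_
        congr 1
        congr 1
        apply Subtype.ext
        show (affS n i (affS n i p.1.1), affS n i (affS n i p.1.2)) = p.1
        rw [affS_inv hn, affS_inv hn]
    · show stepF hn ⟨((i:ℤ), i + 1), basepf⟩ = Sum.inr u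
      simp only [stepF]
      rw [dif_pos ⟨by simp, by simp⟩]
  have e : Quot (InvRel n (π * affS n i)) ≃ ((Quot (InvRel n π)) ⊕ Unit) :=
    ⟨F, G, hGF, hFG⟩
  have hsper : ∀ k : ℤ, (π * affS n i) (k + n) = (π * affS n i) k + n := by
    intro k
    show π (affS n i (k + n)) = π (affS n i k) + n
    rw [affS_per hn, hper]
  haveI : Finite (Quot (InvRel n π)) := quot_finite hn0 hper
  rw [invLength_def, invLength_def, Nat.card_congr e, Nat.card_sum]
  simp

end Aux4
section Aux5
variable {n : ℕ} {π : Equiv.Perm ℤ}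

private lemma affS_self (hn : 2 ≤ n) (i : ℤ) : affS n i i = i + 1 := by
  have := affS_apply hn i i
  rw [if_pos (by simp)] at this
  exact this

private lemma affS_succ1 (hn : 2 ≤ n) (i : ℤ) : affS n i (i + 1) = i := by
  have hc1 : ¬ ((i + 1 - i) % (n:ℤ) = 0) := by
    have hx : i + 1 - i = (1:ℤ) := by ring
    rw [hx, Int.emod_eq_of_lt (by norm_num) (by exact_mod_cast (by omega : 1 < n))]
    norm_num
  have := affS_apply hn i (i + 1)
  rw [if_neg hc1, if_pos (by simp)] at this
  omega

private lemma step_desc {i : ℤ} (hn : 2 ≤ n) (hper : ∀ k : ℤ, π (k + n) = π k + n)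
    (hdesc : π (i + 1) < π i) :
    invLength n π = invLength n (π * affS n i) + 1 := by
  have hsper : ∀ k : ℤ, (π * affS n i) (k + n) = (π * affS n i) k + n := by
    intro k
    show π (affS n i (k + n)) = π (affS n i k) + n
    rw [affS_per hn, hper]
  have hasc' : (π * affS n i) i < (π * affS n i) (i + 1) := by
    show π (affS n i i) < π (affS n i (i + 1))
    rw [affS_self hn, affS_succ1 hn]
    exact hdesc
  have h := step_asc hn hsper hasc'
  rw [mul_assoc, affS_mul_self hn, mul_one] at h
  omega

private lemma step_le (hn : 2 ≤ n) (hper : ∀ k : ℤ, π (k + n) = π k + n) (i : ℤ) :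
    invLength n (π * affS n i) ≤ invLength n π + 1 := by
  rcases lt_trichotomy (π i) (π (i + 1)) with h | h | h
  · rw [step_asc hn hper h]
  · exact absurd (π.injective h) (by omega)
  · have := step_desc hn hper h; omega

private lemma invLength_one : invLength n (1 : Equiv.Perm ℤ) = 0 := by
  haveI : IsEmpty (InvPair (1 : Equiv.Perm ℤ)) := by
    refine ⟨fun p => ?_⟩
    have h1 := p.2.1
    have h2 := p.2.2
    simp only [Equiv.Perm.one_apply] at h2
    omega
  haveI : IsEmpty (Quot (InvRel n (1 : Equiv.Perm ℤ))) :=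
    ⟨fun q => Quot.inductionOn q fun a => (IsEmpty.false a).elim⟩
  rw [invLength_def]
  exact Nat.card_of_isEmpty

private lemma perm_mul_per {a b : Equiv.Perm ℤ}
    (ha : ∀ k : ℤ, a (k + n) = a k + n) (hb : ∀ k : ℤ, b (k + n) = b k + n) :
    ∀ k : ℤ, (a * b) (k + n) = (a * b) k + n := by
  intro k
  show a (b (k + n)) = a (b k) + n
  rw [hb, ha]

private lemma prod_per (hn : 2 ≤ n) (w : List ℤ) :
    ∀ k : ℤ, ((w.map (affS n)).prod) (k + n) = ((w.map (affS n)).prod) k + n := by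
  induction w with
  | nil => intro k; simp
  | cons x w ih =>
      rw [List.map_cons, List.prod_cons]
      exact perm_mul_per (affS_per hn x) ih

private lemma inv_le_len (hn : 2 ≤ n) (w : List ℤ) :
    invLength n ((w.map (affS n)).prod) ≤ w.length := by
  induction w using List.reverseRecOn with
  | nil => simp [invLength_one]
  | append_singleton w x ih =>
      rw [List.map_append, List.prod_append]
      simp only [List.map_cons, List.map_nil, List.prod_cons, List.prod_nil, mul_one,
        List.length_append, List.length_cons, List.length_nil]
      have h := step_le hn (prod_per hn w) x
      omega

private lemma chain_le (π : Equiv.Perm ℤ) :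
    ∀ (d : ℕ) (a : ℤ), (∀ k : ℤ, a ≤ k → k < a + d → π k ≤ π (k + 1)) →
      π a ≤ π (a + d) := by
  intro d
  induction d with
  | zero => intro a _; simp
  | succ d ih =>
      intro a h
      have h1 : π a ≤ π (a + d) := ih a (fun k hk1 hk2 => h k hk1 (by push_cast; omega))
      have h2 : π (a + d) ≤ π (a + d + 1) := h (a + d) (by omega) (by push_cast; omega)
      have hx : a + ((d:ℕ)+1 : ℕ) = a + d + 1 := by push_cast; ring
      rw [hx]
      omega

private lemma exists_descent (hn : 0 < n) (hper : ∀ k : ℤ, π (k + n) = π k + n)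
    (h : invLength n π ≠ 0) :
    ∃ r : ℤ, 1 ≤ r ∧ r ≤ n ∧ π (r + 1) < π r := by
  rw [invLength_eq_card hn hper] at h
  haveI hfin : Finite (Sset n π) := (sset_finite hn hper).to_subtype
  have hne : Nonempty (Sset n π) := (Nat.card_ne_zero.mp h).1
  obtain ⟨⟨⟨a, b⟩, ⟨ha1, ha2⟩, hab, hinv⟩⟩ := hne
  have hinv' : π b < π a := hinv
  have hdesc : ∃ k : ℤ, a ≤ k ∧ k < b ∧ π (k + 1) < π k := by
    by_contra hc
    push_neg at hc
    have hb : b = a + ((b - a).toNat : ℤ) := by omega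
    have hle : π a ≤ π b := by
      rw [hb]
      exact chain_le π (b - a).toNat a (fun k hk1 hk2 => hc k hk1 (by omega))
    omega
  obtain ⟨k, hk1, hk2, hk3⟩ := hdesc
  obtain ⟨r, m, hr1, hr2, hkr⟩ := exists_rep hn k
  refine ⟨r, hr1, hr2, ?_⟩
  have e1 : π k = π r + m * n := by rw [hkr]; exact per_iter hper m r
  have e2 : π (k + 1) = π (r + 1) + m * n := by
    rw [show k + 1 = (r + 1) + m * (n:ℤ) by omega]
    exact per_iter hper m (r + 1)
  omega

private lemma eq_one_of_inv_zero (hn : 0 < n) (hπ : IsAffine n π)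
    (h : invLength n π = 0) : π = 1 := by
  have hper := hπ.1
  have hasc : ∀ k : ℤ, π k < π (k + 1) := by
    intro k
    rcases lt_trichotomy (π k) (π (k + 1)) with hlt | heq | hgt
    · exact hlt
    · exact absurd (π.injective heq) (by omega)
    · exfalso
      obtain ⟨r, m, hr1, hr2, hkr⟩ := exists_rep hn k
      have e1 : π k = π r + m * n := by rw [hkr]; exact per_iter hper m r
      have e2 : π (k + 1) = π (r + 1) + m * n := by
        rw [show k + 1 = (r + 1) + m * (n:ℤ) by omega]
        exact per_iter hper m (r + 1)
      have hmem : ((r, r + 1) : ℤ × ℤ) ∈ Sset n π :=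
        ⟨⟨hr1, hr2⟩, show r < r + 1 by omega, show π (r + 1) < π r by omega⟩
      have hcard : Nat.card (Sset n π) ≠ 0 :=
        Nat.card_ne_zero.mpr ⟨⟨⟨_, hmem⟩⟩, (sset_finite hn hper).to_subtype⟩
      rw [invLength_eq_card hn hper] at h
      exact hcard h
  have hmono : StrictMono π := strictMono_int_of_lt_succ hasc
  have hsucc : ∀ k : ℤ, π (k + 1) = π k + 1 := by
    intro k
    obtain ⟨j, hj⟩ := π.surjective (π k + 1)
    have hpj : π k < π j := by rw [hj]; omega
    have h1 : k < j := hmono.lt_iff_lt.mp hpj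
    have h2 : j ≤ k + 1 := by
      by_contra hc
      push_neg at hc
      have hlt : π (k + 1) < π j := hmono hc
      have h3 := hasc k
      omega
    have hjk : j = k + 1 := by omega
    rw [← hjk]
    omega
  have hform : ∀ k : ℤ, π k = k + π 0 := by
    intro k
    induction k using Int.induction_on with
    | zero => simp
    | succ m ih =>
        have := hsucc m
        push_cast
        push_cast at ih
        omega
    | pred m ih =>
        have := hsucc (-(m : ℤ) - 1)
        rw [show -(m:ℤ) - 1 + 1 = -(m:ℤ) by ring] at this
        push_cast
        push_cast at ih
        omega
  have hsum : (n : ℤ) * π 0 = 0 := by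
    have h2 := hπ.2
    rw [Finset.sum_congr rfl (fun k _ => hform k)] at h2
    rw [Finset.sum_add_distrib, Finset.sum_const, Int.card_Icc] at h2
    have hnn : ((n:ℤ) + 1 - 1).toNat = n := by omega
    rw [hnn] at h2
    have : (n : ℕ) • π 0 = (n : ℤ) * π 0 := by
      rw [nsmul_eq_mul]
    omega
  have hpi0 : π 0 = 0 := by
    rcases mul_eq_zero.mp hsum with hc | hc
    · exfalso; omega
    · exact hc
  apply Equiv.ext
  intro k
  rw [hform k, hpi0]
  simp

end Aux5
section Aux6
variable {n : ℕ} {π : Equiv.Perm ℤ}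

private lemma isAffine_mul_affS (hn : 2 ≤ n) (hπ : IsAffine n π) (i : ℤ) :
    IsAffine n (π * affS n i) := by
  have hper := hπ.1
  have hn0 : 0 < n := by omega
  have hn' : (2:ℤ) ≤ n := by exact_mod_cast hn
  constructor
  · intro k
    show π (affS n i (k + n)) = π (affS n i k) + n
    rw [affS_per hn, hper]
  · -- the sum condition
    obtain ⟨r0, m0, hr01, hr02, hi0⟩ := exists_rep hn0 i
    obtain ⟨r1, m1, hr11, hr12, hi1⟩ := exists_rep hn0 (i + 1)
    -- basic facts
    have hd : r0 + 1 - r1 = (m1 - m0) * n := by rw [sub_mul]; omega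
    have hne : r0 ≠ r1 := by
      intro hc
      have h1 : (n:ℤ) ∣ 1 := by
        refine ⟨m1 - m0, ?_⟩
        rw [mul_sub]
        have e1 : (n:ℤ) * m1 = m1 * n := mul_comm _ _
        have e2 : (n:ℤ) * m0 = m0 * n := mul_comm _ _
        omega
      have := Int.le_of_dvd one_pos h1
      omega
    have hsr0 : affS n i r0 = r0 + 1 := by
      have hc : (r0 - i) % (n:ℤ) = 0 := by
        rw [modz]
        exact ⟨-m0, by rw [hi0]; ring⟩
      have := affS_apply hn i r0
      rw [if_pos hc] at this
      exact this
    have hsr1 : affS n i r1 = r1 - 1 := by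
      have hc1 : ¬ ((r1 - i) % (n:ℤ) = 0) := by
        rw [modz]
        rintro ⟨c, hc⟩
        have h1 : (n:ℤ) ∣ 1 := by
          refine ⟨c + m1, ?_⟩
          rw [mul_add]
          have e1 : (n:ℤ) * m1 = m1 * n := mul_comm _ _
          omega
        have := Int.le_of_dvd one_pos h1
        omega
      have hc2 : (r1 - (i + 1)) % (n:ℤ) = 0 := by
        rw [modz]
        exact ⟨-m1, by rw [hi1]; ring⟩
      have := affS_apply hn i r1
      rw [if_neg hc1, if_pos hc2] at this
      omega
    have hfix : ∀ k : ℤ, 1 ≤ k → k ≤ n → k ≠ r0 → k ≠ r1 → affS n i k = k := by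
      intro k hk1 hk2 hk3 hk4
      have hc1 : ¬ ((k - i) % (n:ℤ) = 0) := by
        rw [modz]
        rintro ⟨c, hc⟩
        have hdv : (n:ℤ) ∣ (k - r0) := by
          refine ⟨c + m0, ?_⟩
          rw [mul_add]
          have e1 : (n:ℤ) * m0 = m0 * n := mul_comm _ _
          omega
        have := dvd_small (by omega) hdv (by omega) (by omega)
        omega
      have hc2 : ¬ ((k - (i + 1)) % (n:ℤ) = 0) := by
        rw [modz]
        rintro ⟨c, hc⟩
        have hdv : (n:ℤ) ∣ (k - r1) := by
          refine ⟨c + m1, ?_⟩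
          rw [mul_add]
          have e1 : (n:ℤ) * m1 = m1 * n := mul_comm _ _
          omega
        have := dvd_small (by omega) hdv (by omega) (by omega)
        omega
      have := affS_apply hn i k
      rw [if_neg hc1, if_neg hc2] at this
      exact this
    -- values at r0 and r1
    set d : ℤ := m1 - m0 with hdd
    have hval0 : π (affS n i r0) = π r1 + d * n := by
      rw [hsr0, show r0 + 1 = r1 + d * (n:ℤ) by omega]
      exact per_iter hper d r1
    have hval1 : π (affS n i r1) = π r0 - d * n := by
      rw [hsr1, show r1 - 1 = r0 + (-d) * (n:ℤ) by rw [neg_mul]; omega]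
      rw [per_iter hper (-d) r0]
      ring
    -- sum manipulation
    have hg : ∀ k : ℤ, (π * affS n i) k = π (affS n i k) := fun k => rfl
    have hmem0 : r0 ∈ Finset.Icc (1:ℤ) n := Finset.mem_Icc.mpr ⟨hr01, hr02⟩
    have hmem1 : r1 ∈ (Finset.Icc (1:ℤ) n).erase r0 :=
      Finset.mem_erase.mpr ⟨fun hc => hne (hc.symm), Finset.mem_Icc.mpr ⟨hr11, hr12⟩⟩
    have key : ∑ k ∈ Finset.Icc (1:ℤ) n, π (affS n i k) = ∑ k ∈ Finset.Icc (1:ℤ) n, π k := by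
      rw [← Finset.sum_erase_add _ _ hmem0, ← Finset.sum_erase_add _ _ hmem1]
      rw [← Finset.sum_erase_add _ (fun k => π k) hmem0,
          ← Finset.sum_erase_add _ (fun k => π k) hmem1]
      have hcongr : ∑ k ∈ ((Finset.Icc (1:ℤ) n).erase r0).erase r1, π (affS n i k)
          = ∑ k ∈ ((Finset.Icc (1:ℤ) n).erase r0).erase r1, π k := by
        apply Finset.sum_congr rfl
        intro k hk
        have h1 := Finset.mem_erase.mp hk
        have h2 := Finset.mem_erase.mp h1.2
        have h3 := Finset.mem_Icc.mp h2.2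
        rw [hfix k h3.1 h3.2 h2.1 h1.1]
      rw [hcongr, hval0, hval1]
      ring
    have h2 := hπ.2
    calc ∑ k ∈ Finset.Icc (1:ℤ) n, (π * affS n i) k
        = ∑ k ∈ Finset.Icc (1:ℤ) n, π (affS n i k) := Finset.sum_congr rfl (fun k _ => hg k)
      _ = ∑ k ∈ Finset.Icc (1:ℤ) n, π k := key
      _ = ∑ k ∈ Finset.Icc (1:ℤ) n, k := h2

private lemma exists_word (hn : 2 ≤ n) :
    ∀ (N : ℕ) (π : Equiv.Perm ℤ), IsAffine n π → invLength n π = N →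
    ∃ w : List ℤ, (∀ x ∈ w, 1 ≤ x ∧ x ≤ (n:ℤ)) ∧ (w.map (affS n)).prod = π ∧
      w.length = N := by
  intro N
  induction N with
  | zero =>
      intro π hπ h0
      have := eq_one_of_inv_zero (by omega) hπ h0
      exact ⟨[], by simp, by simp [this], rfl⟩
  | succ N ih =>
      intro π hπ hN
      obtain ⟨r, hr1, hr2, hdesc⟩ := exists_descent (by omega) hπ.1 (by omega)
      have haff' : IsAffine n (π * affS n r) := isAffine_mul_affS hn hπ r
      have hstep := step_desc hn hπ.1 hdesc
      obtain ⟨w, hw, hprod, hlen⟩ := ih (π * affS n r) haff' (by omega)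
      refine ⟨w ++ [r], ?_, ?_, ?_⟩
      · intro x hx
        rcases List.mem_append.mp hx with h | h
        · exact hw x h
        · simp at h; subst h; exact ⟨hr1, hr2⟩
      · rw [List.map_append, List.prod_append, hprod]
        simp only [List.map_cons, List.map_nil, List.prod_cons, List.prod_nil, mul_one]
        rw [mul_assoc, affS_mul_self hn, mul_one]
      · simp [hlen]

end Aux6
/-- the Coxeter length of an affine permutation equals the number of
equivalence classes of its inversion set under diagonal translation by `nℤ`. -/
theorem wordLength_eq_invLength (n : ℕ) (hn : 0 < n)
    (π : Equiv.Perm ℤ) (hπ : IsAffine n π) :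
    wordLength n π = invLength n π := by
  rcases eq_or_lt_of_le (show 1 ≤ n from hn) with h1 | h2
  · -- n = 1 : π must be the identity
    have hn1 : n = 1 := h1.symm
    subst hn1
    have hone : π = 1 := by
      have hper := hπ.1
      have hsum := hπ.2
      have h11 : π 1 = 1 := by simpa using hsum
      have hform : ∀ k : ℤ, π k = k := by
        intro k
        have hp := per_iter (n := 1) hper (k - 1) 1
        have hx : (1:ℤ) + (k - 1) * ((1:ℕ):ℤ) = k := by push_cast; ring
        rw [hx] at hp
        rw [hp, h11]
        push_cast
        ring
      apply Equiv.ext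
      intro k
      rw [hform k]
      simp
    subst hone
    have hw : wordLength 1 (1 : Equiv.Perm ℤ) ≤ 0 :=
      Nat.sInf_le ⟨[], by simp, by simp, rfl⟩
    have hi : invLength 1 (1 : Equiv.Perm ℤ) = 0 := invLength_one
    omega
  · -- n ≥ 2
    have hn2 : 2 ≤ n := h2
    obtain ⟨w, hw, hprod, hlen⟩ := exists_word hn2 (invLength n π) π hπ rfl
    have hub : wordLength n π ≤ invLength n π := by
      have := Nat.sInf_le (s := {l : ℕ | ∃ w : List ℤ,
          (∀ x ∈ w, 1 ≤ x ∧ x ≤ (n : ℤ)) ∧ (w.map (affS n)).prod = π ∧ w.length = l})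
        ⟨w, hw, hprod, hlen⟩
      rw [← hlen]
      exact Nat.sInf_le ⟨w, hw, hprod, rfl⟩
    have hnemp : {l : ℕ | ∃ w : List ℤ,
        (∀ x ∈ w, 1 ≤ x ∧ x ≤ (n : ℤ)) ∧ (w.map (affS n)).prod = π ∧ w.length = l}.Nonempty :=
      ⟨w.length, w, hw, hprod, rfl⟩
    have hmem := Nat.sInf_mem hnemp
    obtain ⟨w', hw', hprod', hlen'⟩ := hmem
    have hlen'' : w'.length = wordLength n π := hlen'
    have hlow : invLength n π ≤ wordLength n π := by
      calc invLength n π = invLength n ((w'.map (affS n)).prod) := by rw [hprod']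
        _ ≤ w'.length := inv_le_len hn2 w'
        _ = wordLength n π := hlen''
    omega
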